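/- Let ν > 0, α > 0, Γ ∈ ℝ, and let v be the Burgers vortex field v(x, y, z) = (−αx − g(r) y, −αy + g(r) x, 2αz) with g(r) = Γ(1 − e^{−α r²/(2ν)})/(2π r²) and r = √(x² + y²). Then: (a) the vorticity curl v equals (0, 0, ω(r)) with ω(r) = (αΓ/(2πν)) e^{−α r²/(2ν)}; and (b) for every R > 0, the dissipation over the disk of radius R per unit length satisfies exactly ν ∫_{x²+y²≤R²} ω(√(x²+y²))² dx dy = (α Γ²/(4π)) (1 − e^{−α R²/ν}); in particular this quantity tends to α Γ²/(4π) as ν → 0⁺ (finite anomalous dissipation in the inviscid limit). -/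

import Mathlib

noncomputable section

open MeasureTheory Filter Set
open scoped RealInnerProductSpace Topology

abbrev E3 : Type := EuclideanSpace ℝ (Fin 3)
abbrev E2 : Type := EuclideanSpace ℝ (Fin 2)

def mk3 (a b c : ℝ) : E3 := (EuclideanSpace.equiv (Fin 3) ℝ).symm ![a, b, c]

def e3 (i : Fin 3) : E3 := EuclideanSpace.single i 1

/-- `∂_j v_i` at `p`. -/
def pder (v : E3 → E3) (i j : Fin 3) (p : E3) : ℝ := fderiv ℝ v p (e3 j) i

def div3 (v : E3 → E3) (p : E3) : ℝ := ∑ i, pder v i i p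

def curl3 (v : E3 → E3) (p : E3) : E3 :=
  mk3 (pder v 2 1 p - pder v 1 2 p) (pder v 0 2 p - pder v 2 0 p)
    (pder v 1 0 p - pder v 0 1 p)

def lap3 (f : E3 → ℝ) (p : E3) : ℝ :=
  ∑ j, fderiv ℝ (fun x => fderiv ℝ f x (e3 j)) p (e3 j)

def IsTangentAt (S : Set E3) (p v : E3) : Prop :=
  ∃ γ : ℝ → E3, (∀ t, γ t ∈ S) ∧ γ 0 = p ∧ HasDerivAt γ v 0

def IsSurface (k : ℕ∞) (S : Set E3) : Prop :=
  ∀ p ∈ S, ∃ (f : E2 → E3) (U : Set E2) (V : Set E3),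
    IsOpen U ∧ IsOpen V ∧ p ∈ V ∧ ContDiffOn ℝ k f U ∧ Set.InjOn f U ∧
    f '' U = S ∩ V ∧ ∀ x ∈ U, Function.Injective (fderiv ℝ f x)

structure CVSBase (S Ωm Ωp : Set E3) (vm vp : E3 → E3) : Prop where
  openm : IsOpen Ωm
  openp : IsOpen Ωp
  disj : Disjoint Ωm Ωp
  disjm : Disjoint Ωm S
  disjp : Disjoint Ωp S
  clm : S ⊆ closure Ωm
  clp : S ⊆ closure Ωp
  smoothm : ∃ W, IsOpen W ∧ Ωm ∪ S ⊆ W ∧ ContDiffOn ℝ 1 vm W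
  smoothp : ∃ W, IsOpen W ∧ Ωp ∪ S ⊆ W ∧ ContDiffOn ℝ 1 vp W
  divm : ∀ p ∈ Ωm, div3 vm p = 0
  divp : ∀ p ∈ Ωp, div3 vp p = 0
  curlm : ∀ p ∈ Ωm, curl3 vm p = 0
  curlp : ∀ p ∈ Ωp, curl3 vp p = 0
  tangentm : ∀ p ∈ S, IsTangentAt S p (vm p)
  tangentp : ∀ p ∈ S, IsTangentAt S p (vp p)

structure CVSPair (S Ωm Ωp : Set E3) (vm vp : E3 → E3)
    extends CVSBase S Ωm Ωp vm vp : Prop where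
  strain : ∀ p ∈ S, (fderiv ℝ vp p + fderiv ℝ vm p) (vp p - vm p) = 0
  bernoulli : ∀ p ∈ S, ∀ᶠ q in 𝓝[S] p,
    ‖vp q‖ ^ 2 - ‖vm q‖ ^ 2 = ‖vp p‖ ^ 2 - ‖vm p‖ ^ 2

/-- the open region `Ωm` is the bounded region enclosed by the closed surface `S`,
and `Ωp` is its exterior. -/
structure EnclosedBy (S Ωm Ωp : Set E3) : Prop where
  openm : IsOpen Ωm
  bounded : Bornology.IsBounded Ωm
  fr : frontier Ωm = S
  plus : Ωp = (Ωm ∪ S)ᶜ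


def phiB (t : ℝ) : ℝ := ∫ u in (0:ℝ)..1, Real.exp (-(t*u))

lemma phiB_eq (t : ℝ) : phiB t = if t = 0 then 1 else (1 - Real.exp (-t))/t := by
  unfold phiB
  rcases eq_or_ne t 0 with h|h
  · subst h; simp
  · rw [if_neg h]
    have key : ∀ u ∈ Set.uIcc (0:ℝ) 1,
        HasDerivAt (fun u => -Real.exp (-(t*u))/t) (Real.exp (-(t*u))) u := by
      intro u _
      have h1 : HasDerivAt (fun u : ℝ => -(t*u)) (-t) u := by
        exact ((hasDerivAt_id' u).const_mul t).neg.congr_deriv (by ring)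
      have h2 := (Real.hasDerivAt_exp (-(t*u))).comp u h1
      have h3 := h2.neg.div_const t
      refine h3.congr_deriv ?_
      rw [mul_neg, neg_neg, div_eq_iff h]
    rw [intervalIntegral.integral_eq_sub_of_hasDerivAt key
      ((Continuous.intervalIntegrable (by continuity) 0 1))]
    field_simp
    rw [mul_zero, neg_zero, Real.exp_zero]; ring

lemma phiB_hasDerivAt (t₀ : ℝ) :
    HasDerivAt phiB (∫ u in (0:ℝ)..1, -u * Real.exp (-(t₀*u))) t₀ := by
  have := (intervalIntegral.hasDerivAt_integral_of_dominated_loc_of_deriv_le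
    (F := fun x u => Real.exp (-(x*u))) (F' := fun x u => -u * Real.exp (-(x*u)))
    (x₀ := t₀) (a := 0) (b := 1) (bound := fun _ => Real.exp (|t₀|+1)) (μ := volume)
    (s := Metric.ball t₀ 1) (Metric.ball_mem_nhds t₀ one_pos)
    (Filter.Eventually.of_forall fun x => (Continuous.aestronglyMeasurable (by continuity)))
    ((Continuous.intervalIntegrable (by continuity) 0 1))
    (Continuous.aestronglyMeasurable (by continuity))
    ?_ ((Continuous.intervalIntegrable (by continuity) 0 1)) ?_)
  · exact this.2
  · refine Filter.Eventually.of_forall fun u hu x hx => ?_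
    have hu' : u ∈ Set.Ioc (0:ℝ) 1 := by simpa [Set.uIoc_of_le] using hu
    have hx' : |x| ≤ |t₀| + 1 := by
      have := abs_sub_abs_le_abs_sub x t₀
      have h2 : |x - t₀| < 1 := by simpa [Real.dist_eq] using hx
      linarith
    have h1 : |(-u * Real.exp (-(x*u)))| = u * Real.exp (-(x*u)) := by
      rw [abs_mul, abs_neg, abs_of_nonneg hu'.1.le, abs_of_nonneg (Real.exp_pos _).le]
    rw [Real.norm_eq_abs, h1]
    have h2 : -(x*u) ≤ |t₀| + 1 := by
      calc -(x*u) ≤ |x*u| := neg_le_abs _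
        _ = |x| * u := by rw [abs_mul, abs_of_nonneg hu'.1.le]
        _ ≤ (|t₀|+1) * 1 := by
            apply mul_le_mul hx' hu'.2 hu'.1.le (by positivity)
        _ = |t₀| + 1 := by ring
    calc u * Real.exp (-(x*u)) ≤ 1 * Real.exp (|t₀|+1) := by
          apply mul_le_mul hu'.2 (Real.exp_le_exp.2 h2) (Real.exp_pos _).le one_pos.le
      _ = Real.exp (|t₀|+1) := one_mul _
  · refine Filter.Eventually.of_forall fun u hu x hx => ?_
    have h1 : HasDerivAt (fun x : ℝ => -(x*u)) (-u) x := by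
      exact ((hasDerivAt_id' x).mul_const u).neg.congr_deriv (by ring)
    have h2 := (Real.hasDerivAt_exp (-(x*u))).comp x h1
    exact h2.congr_deriv (by ring)

lemma phiB_diff (t : ℝ) : DifferentiableAt ℝ phiB t := (phiB_hasDerivAt t).differentiableAt

lemma phiB_deriv_ne (t : ℝ) (ht : t ≠ 0) :
    HasDerivAt phiB ((Real.exp (-t) * t - (1 - Real.exp (-t)))/t^2) t := by
  have hev : phiB =ᶠ[nhds t] fun t => (1 - Real.exp (-t))/t := by
    filter_upwards [isOpen_ne.mem_nhds (x := t) (by simpa using ht)] with x hx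
    rw [phiB_eq, if_neg hx]
  have h1 : HasDerivAt (fun t : ℝ => 1 - Real.exp (-t)) (Real.exp (-t)) t := by
    have := (Real.hasDerivAt_exp (-t)).comp t (hasDerivAt_neg t)
    exact ((hasDerivAt_const t (1:ℝ)).sub this).congr_deriv (by ring)
  have h2 := h1.div (hasDerivAt_id t) ht
  have h3 : HasDerivAt (fun t : ℝ => (1 - Real.exp (-t))/t)
      ((Real.exp (-t) * t - (1 - Real.exp (-t)))/t^2) t := by
    refine h2.congr_deriv ?_
    simp only [id, mul_one]
  exact h3.congr_of_eventuallyEq hev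


lemma radial_int (a R : ℝ) (ha : 0 < a) (hR : 0 < R) :
    ∫ r in Set.Ioc 0 R, r * Real.exp (-(a*r^2)) = (1 - Real.exp (-(a*R^2)))/(2*a) := by
  rw [← intervalIntegral.integral_of_le hR.le]
  have key : ∀ r ∈ Set.uIcc (0:ℝ) R,
      HasDerivAt (fun r => -Real.exp (-(a*r^2))/(2*a)) (r * Real.exp (-(a*r^2))) r := by
    intro r _
    have h1 : HasDerivAt (fun r : ℝ => -(a*r^2)) (-(a*(2*r))) r := by
      exact ((hasDerivAt_pow 2 r).const_mul a).neg.congr_deriv (by ring)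
    have h2 := ((Real.hasDerivAt_exp (-(a*r^2))).comp r h1).neg.div_const (2*a)
    refine h2.congr_deriv ?_
    rw [mul_neg, neg_neg, div_eq_iff (by positivity)]; ring
  rw [intervalIntegral.integral_eq_sub_of_hasDerivAt key
    ((Continuous.intervalIntegrable (by continuity) 0 R))]
  field_simp
  rw [zero_pow two_ne_zero, mul_zero, neg_zero, Real.exp_zero]; ring

lemma disk_integral (a R : ℝ) (ha : 0 < a) (hR : 0 < R) :
    ∫ x in {x : ℝ × ℝ | x.1^2 + x.2^2 ≤ R^2}, Real.exp (-(a*(x.1^2+x.2^2)))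
      = Real.pi / a * (1 - Real.exp (-(a*R^2))) := by
  have hmeas : MeasurableSet {x : ℝ × ℝ | x.1^2 + x.2^2 ≤ R^2} :=
    measurableSet_le (by fun_prop) measurable_const
  rw [← integral_indicator hmeas, ← integral_comp_polarCoord_symm]
  have hpt : ∀ p : ℝ × ℝ,
      p.1 • Set.indicator {x : ℝ × ℝ | x.1^2 + x.2^2 ≤ R^2}
        (fun x => Real.exp (-(a*(x.1^2+x.2^2)))) (polarCoord.symm p)
      = Set.indicator {x : ℝ × ℝ | x.1^2 ≤ R^2}
        (fun p : ℝ × ℝ => p.1 * Real.exp (-(a*p.1^2))) p := by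
    intro p
    have hsq : (polarCoord.symm p).1^2 + (polarCoord.symm p).2^2 = p.1^2 := by
      rw [polarCoord_symm_apply]
      have := Real.cos_sq_add_sin_sq p.2
      dsimp
      nlinarith [Real.cos_sq_add_sin_sq p.2]
    rw [Set.indicator_apply, Set.indicator_apply]
    simp only [Set.mem_setOf_eq, hsq]
    split
    · simp [smul_eq_mul]
    · simp
  simp only [hpt]
  rw [setIntegral_indicator (measurableSet_le (by fun_prop) measurable_const)]
  have hset : polarCoord.target ∩ {x : ℝ × ℝ | x.1^2 ≤ R^2}
      = Set.Ioc 0 R ×ˢ Set.Ioo (-Real.pi) Real.pi := by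
    rw [polarCoord_target]
    ext ⟨r, θ⟩
    simp only [Set.mem_inter_iff, Set.mem_prod, Set.mem_Ioi, Set.mem_Ioo, Set.mem_setOf_eq,
      Set.mem_Ioc]
    constructor
    · rintro ⟨⟨h1, h2⟩, h3⟩
      exact ⟨⟨h1, by nlinarith⟩, h2⟩
    · rintro ⟨⟨h1, h2⟩, h3⟩
      exact ⟨⟨h1, h3⟩, by nlinarith⟩
  rw [hset, Measure.volume_eq_prod, ← Measure.prod_restrict]
  have hfg : (fun x : ℝ × ℝ => x.1 * Real.exp (-(a*x.1^2)))
      = fun z : ℝ × ℝ => (fun r => r * Real.exp (-(a*r^2))) z.1 * (fun _ => (1:ℝ)) z.2 := by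
    funext z; simp
  rw [hfg, integral_prod_mul (μ := volume.restrict (Set.Ioc 0 R))
    (ν := volume.restrict (Set.Ioo (-Real.pi) Real.pi))
    (f := fun r => r * Real.exp (-(a*r^2))) (g := fun _ => (1:ℝ))]
  rw [radial_int a R ha hR, setIntegral_const]
  rw [Real.volume_real_Ioo, smul_eq_mul]
  rw [max_eq_left (by linarith [Real.pi_pos])]
  have hπ := Real.pi_pos
  field_simp
  ring

lemma e3_apply (i j : Fin 3) : e3 i j = if i = j then 1 else 0 := by
  simp [e3, EuclideanSpace.single_apply, eq_comm]

def burg (α K c : ℝ) : E3 → E3 := fun q =>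
  mk3 (-(α * q 0) - K*c*phiB (c*((q 0)^2+(q 1)^2)) * q 1)
      (-(α * q 1) + K*c*phiB (c*((q 0)^2+(q 1)^2)) * q 0)
      (2*α*q 2)

lemma curl_burg (α K c : ℝ) (p : E3) :
    curl3 (burg α K c) p = mk3 0 0
      (2*(K*c*phiB (c*((p 0)^2+(p 1)^2))) +
       2*((p 0)^2+(p 1)^2) * (K*c*(deriv phiB (c*((p 0)^2+(p 1)^2)) * c))) := by
  set s := (p 0)^2 + (p 1)^2 with hs
  -- coordinate projections
  have h0 : HasFDerivAt (𝕜 := ℝ) (fun q : E3 => q 0) (EuclideanSpace.proj (0:Fin 3)) p :=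
    ContinuousLinearMap.hasFDerivAt (EuclideanSpace.proj (𝕜 := ℝ) (0:Fin 3))
  have h1 : HasFDerivAt (𝕜 := ℝ) (fun q : E3 => q 1) (EuclideanSpace.proj (1:Fin 3)) p :=
    ContinuousLinearMap.hasFDerivAt (EuclideanSpace.proj (𝕜 := ℝ) (1:Fin 3))
  have h2 : HasFDerivAt (𝕜 := ℝ) (fun q : E3 => q 2) (EuclideanSpace.proj (2:Fin 3)) p :=
    ContinuousLinearMap.hasFDerivAt (EuclideanSpace.proj (𝕜 := ℝ) (2:Fin 3))
  have hσ : HasFDerivAt (𝕜 := ℝ) (fun q : E3 => (q 0)^2 + (q 1)^2)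
      (((2:ℕ)*(p 0)^1) • EuclideanSpace.proj (0:Fin 3)
        + ((2:ℕ)*(p 1)^1) • EuclideanSpace.proj (1:Fin 3)) p := by
    exact ((hasDerivAt_pow 2 (p 0)).comp_hasFDerivAt p h0).add
      ((hasDerivAt_pow 2 (p 1)).comp_hasFDerivAt p h1)
  set Lσ : E3 →L[ℝ] ℝ := ((2:ℕ)*(p 0)^1) • EuclideanSpace.proj (0:Fin 3)
        + ((2:ℕ)*(p 1)^1) • EuclideanSpace.proj (1:Fin 3) with hLσ
  set dφ := deriv phiB (c * s) with hdφ
  have hφ : HasFDerivAt (𝕜 := ℝ) (fun q : E3 => phiB (c*((q 0)^2+(q 1)^2))) (dφ • (c • Lσ)) p := by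
    exact (phiB_diff (c*s)).hasDerivAt.comp_hasFDerivAt p (hσ.const_mul c)
  have hKφ : HasFDerivAt (𝕜 := ℝ) (fun q : E3 => K*c*phiB (c*((q 0)^2+(q 1)^2)))
      ((K*c) • (dφ • (c • Lσ))) p := hφ.const_mul (K*c)
  set LH : E3 →L[ℝ] ℝ := (K*c) • (dφ • (c • Lσ)) with hLH
  set Hp : ℝ := K*c*phiB (c*s) with hHp
  set L0 : E3 →L[ℝ] ℝ :=
    -(α • EuclideanSpace.proj (0:Fin 3)) - (Hp • EuclideanSpace.proj (1:Fin 3) + (p 1) • LH)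
    with hL0
  set L1 : E3 →L[ℝ] ℝ :=
    -(α • EuclideanSpace.proj (1:Fin 3)) + (Hp • EuclideanSpace.proj (0:Fin 3) + (p 0) • LH)
    with hL1
  set L2 : E3 →L[ℝ] ℝ := (2*α) • EuclideanSpace.proj (2:Fin 3) with hL2
  have hf0 : HasFDerivAt (𝕜 := ℝ) (fun q : E3 =>
      -(α * q 0) - K*c*phiB (c*((q 0)^2+(q 1)^2)) * q 1) L0 p :=
    ((h0.const_mul α).neg).sub (hKφ.mul h1)
  have hf1 : HasFDerivAt (𝕜 := ℝ) (fun q : E3 =>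
      -(α * q 1) + K*c*phiB (c*((q 0)^2+(q 1)^2)) * q 0) L1 p :=
    ((h1.const_mul α).neg).add (hKφ.mul h0)
  have hf2 : HasFDerivAt (𝕜 := ℝ) (fun q : E3 => 2*α*q 2) L2 p := h2.const_mul (2*α)
  set Φ : E3 →L[ℝ] E3 :=
    (((EuclideanSpace.equiv (Fin 3) ℝ).symm : (Fin 3 → ℝ) →L[ℝ] E3)).comp
      (ContinuousLinearMap.pi ![L0, L1, L2]) with hΦ
  have hvF : HasFDerivAt (burg α K c) Φ p := by
    have hw : HasFDerivAt (𝕜 := ℝ) (fun (q : E3) (i : Fin 3) =>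
        ![fun q : E3 => -(α * q 0) - K*c*phiB (c*((q 0)^2+(q 1)^2)) * q 1,
          fun q : E3 => -(α * q 1) + K*c*phiB (c*((q 0)^2+(q 1)^2)) * q 0,
          fun q : E3 => 2*α*q 2] i q)
        (ContinuousLinearMap.pi ![L0, L1, L2]) p := by
      apply hasFDerivAt_pi.2
      intro i
      fin_cases i
      · exact hf0
      · exact hf1
      · exact hf2
    have hc := (((EuclideanSpace.equiv (Fin 3) ℝ).symm :
        (Fin 3 → ℝ) →L[ℝ] E3)).hasFDerivAt.comp p hw
    refine hc.congr_of_eventuallyEq (Filter.Eventually.of_forall fun q => ?_)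
    ext i
    fin_cases i <;> rfl
  have hfd := hvF.fderiv
  have hpd : ∀ i j : Fin 3, pder (burg α K c) i j p = (![L0, L1, L2] i) (e3 j) := by
    intro i j
    rw [pder, hfd]
    rfl
  unfold curl3 mk3
  rw [hpd, hpd, hpd, hpd, hpd, hpd]
  ext i
  fin_cases i <;>
    simp [hL0, hL1, hL2, hLH, hLσ, e3_apply, hHp, hdφ, hs,
      ContinuousLinearMap.smul_apply, ContinuousLinearMap.add_apply,
      ContinuousLinearMap.sub_apply, ContinuousLinearMap.neg_apply] <;>
    ring

/-- For the Burgers vortex `v` with `ν > 0`, `α > 0`, circulation `Γ`: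
(a) its vorticity is `curl v = (0, 0, ω(r))` with `ω(r) = (αΓ/(2πν)) e^{−αr²/(2ν)}`;
(b) for every `R > 0` the dissipation over the disk of radius `R` per unit length equals
`ν ∫_{x²+y²≤R²} ω² = (αΓ²/(4π))(1 − e^{−αR²/ν})`, and this quantity tends to the finite
anomalous dissipation `αΓ²/(4π)` in the inviscid limit `ν → 0⁺`. -/
theorem statement15
    (ν α Γ : ℝ) (hν : 0 < ν) (hα : 0 < α)
    (g : ℝ → ℝ)
    (hg : ∀ r : ℝ, g r =
      if r = 0 then Γ * α / (4 * Real.pi * ν)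
      else Γ * (1 - Real.exp (-(α * r ^ 2) / (2 * ν))) / (2 * Real.pi * r ^ 2))
    (v : E3 → E3)
    (hv : ∀ p : E3, v p =
      mk3 (-(α * p 0) - g (Real.sqrt ((p 0) ^ 2 + (p 1) ^ 2)) * p 1)
          (-(α * p 1) + g (Real.sqrt ((p 0) ^ 2 + (p 1) ^ 2)) * p 0)
          (2 * α * p 2))
    (ω : ℝ → ℝ)
    (hω : ∀ r : ℝ, ω r = (α * Γ / (2 * Real.pi * ν)) * Real.exp (-(α * r ^ 2) / (2 * ν))) :
    (∀ p : E3, curl3 v p = mk3 0 0 (ω (Real.sqrt ((p 0) ^ 2 + (p 1) ^ 2)))) ∧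
    (∀ R : ℝ, 0 < R →
      ν * (∫ x in {x : ℝ × ℝ | x.1 ^ 2 + x.2 ^ 2 ≤ R ^ 2},
            (ω (Real.sqrt (x.1 ^ 2 + x.2 ^ 2))) ^ 2) =
        α * Γ ^ 2 / (4 * Real.pi) * (1 - Real.exp (-(α * R ^ 2) / ν))) ∧
    (∀ R : ℝ, 0 < R →
      Filter.Tendsto
        (fun t : ℝ => α * Γ ^ 2 / (4 * Real.pi) * (1 - Real.exp (-(α * R ^ 2) / t)))
        (𝓝[>] (0:ℝ)) (𝓝 (α * Γ ^ 2 / (4 * Real.pi)))) := by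
  
  have hπ := Real.pi_pos
  have hgH : ∀ x y : ℝ, g (Real.sqrt (x^2+y^2))
      = Γ/(2*Real.pi)*(α/(2*ν))*phiB ((α/(2*ν))*(x^2+y^2)) := by
    intro x y
    have hs0 : (0:ℝ) ≤ x^2+y^2 := by positivity
    rcases eq_or_ne (x^2+y^2) 0 with h|h
    · rw [h, Real.sqrt_zero, hg 0, if_pos rfl, mul_zero, phiB_eq 0, if_pos rfl, mul_one]
      rw [div_mul_div_comm]
      congr 1
      ring
    · have hspos : 0 < x^2+y^2 := lt_of_le_of_ne hs0 (Ne.symm h)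
      have hsq : Real.sqrt (x^2+y^2) ≠ 0 := by
        rw [Ne, Real.sqrt_eq_zero']
        push_neg
        exact hspos
      rw [hg, if_neg hsq, Real.sq_sqrt hs0, phiB_eq,
        if_neg (by positivity : (α/(2*ν))*(x^2+y^2) ≠ 0)]
      rw [show -(α * (x ^ 2 + y ^ 2)) / (2 * ν) = -(α / (2 * ν) * (x ^ 2 + y ^ 2)) by ring]
      field_simp
  have hveq : v = burg α (Γ/(2*Real.pi)) (α/(2*ν)) := by
    funext q
    rw [hv q, hgH (q 0) (q 1)]
    rfl
  refine ⟨?_, ?_, ?_⟩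
  · -- part (a)
    intro p
    rw [hveq, curl_burg]
    refine congrArg (mk3 0 0) ?_
    rw [hω, Real.sq_sqrt (by positivity : (0:ℝ) ≤ (p 0)^2 + (p 1)^2)]
    rcases eq_or_ne ((p 0)^2 + (p 1)^2) 0 with h|h
    · rw [h, mul_zero, phiB_eq 0, if_pos rfl]
      rw [show -(α * 0) / (2 * ν) = 0 by ring, Real.exp_zero]
      field_simp
      ring
    · have hspos : 0 < (p 0)^2 + (p 1)^2 :=
        lt_of_le_of_ne (by positivity) (Ne.symm h)
      have hcs : (α/(2*ν)) * ((p 0)^2 + (p 1)^2) ≠ 0 := by positivity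
      rw [(phiB_deriv_ne _ hcs).deriv, phiB_eq, if_neg hcs]
      rw [show -(α * ((p 0)^2 + (p 1)^2)) / (2 * ν)
        = -(α / (2 * ν) * ((p 0)^2 + (p 1)^2)) by ring]
      field_simp [h]
      ring
  · -- part (b)
    intro R hR
    have hpt : ∀ x : ℝ × ℝ, (ω (Real.sqrt (x.1^2 + x.2^2)))^2
        = (α*Γ/(2*Real.pi*ν))^2 * Real.exp (-((α/ν)*(x.1^2+x.2^2))) := by
      intro x
      rw [hω, Real.sq_sqrt (by positivity : (0:ℝ) ≤ x.1^2 + x.2^2), mul_pow]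
      congr 1
      rw [show -((α/ν)*(x.1^2+x.2^2)) = ((2:ℕ) : ℝ) * (-(α * (x.1^2+x.2^2)) / (2*ν)) by
        push_cast; field_simp]
      rw [Real.exp_nat_mul]
    simp only [hpt]
    rw [integral_const_mul, disk_integral (α/ν) R (by positivity) hR]
    rw [show -(α/ν*R^2) = -(α*R^2)/ν by ring]
    field_simp
    ring
  · -- part (c)
    intro R hR
    have h1 : Tendsto (fun t : ℝ => -(α*R^2)/t) (nhdsWithin 0 (Set.Ioi 0)) atBot := by
      rw [show (fun t : ℝ => -(α*R^2)/t) = fun t : ℝ => -((α*R^2) * t⁻¹) by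
        funext t; ring]
      rw [tendsto_neg_atBot_iff]
      exact Tendsto.const_mul_atTop (by positivity) tendsto_inv_nhdsGT_zero
    have h2 : Tendsto (fun t : ℝ => Real.exp (-(α*R^2)/t)) (nhdsWithin 0 (Set.Ioi 0))
        (nhds 0) := Real.tendsto_exp_atBot.comp h1
    have h3 := (tendsto_const_nhds (x := (1:ℝ))
      (f := nhdsWithin 0 (Set.Ioi 0))).sub h2
    have h4 := h3.const_mul (α * Γ ^ 2 / (4 * Real.pi))
    simpa using h4
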